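/- Every lattice polygon P ⊂ ℝ² admits a triangulation into lattice triangles each of which is basic (its vertices v_0, v_1, v_2 satisfy that v_1 − v_0, v_2 − v_0 is a ℤ-basis of ℤ²); equivalently, every maximal lattice triangulation of a lattice polygon in dimension 2 is basic. -/

import Mathlib

namespace S10

noncomputable section

def emb (p : ℤ × ℤ) : ℝ × ℝ := ((p.1 : ℝ), (p.2 : ℝ))

lemma emb_inj : Function.Injective emb := by
  intro p q h
  simp only [emb, Prod.mk.injEq] at h
  exact Prod.ext (by exact_mod_cast h.1) (by exact_mod_cast h.2)

def crossR (u w : ℝ × ℝ) : ℝ := u.1 * w.2 - u.2 * w.1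

def aff (ν q x : ℝ × ℝ) : ℝ := ν.1 * (x.2 - q.2) - ν.2 * (x.1 - q.1)

lemma aff_neg (ν q x : ℝ × ℝ) : aff (-ν) q x = - aff ν q x := by
  simp [aff]; ring

lemma convex_affLE (ν q : ℝ × ℝ) : Convex ℝ {x | aff ν q x ≤ 0} := by
  have h : IsLinearMap ℝ (fun x : ℝ × ℝ => ν.1 * x.2 - ν.2 * x.1) := by
    constructor
    · intro x y; simp [Prod.fst_add, Prod.snd_add]; ring
    · intro c x; simp [Prod.smul_fst, Prod.smul_snd, smul_eq_mul]; ring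
  have : {x : ℝ × ℝ | aff ν q x ≤ 0} = {x | (fun x : ℝ × ℝ => ν.1 * x.2 - ν.2 * x.1) x ≤ ν.1 * q.2 - ν.2 * q.1} := by
    ext x; simp [aff]; constructor <;> intro <;> linarith
  rw [this]
  exact convex_halfSpace_le h _

lemma convex_affGE (ν q : ℝ × ℝ) : Convex ℝ {x | 0 ≤ aff ν q x} := by
  have : {x : ℝ × ℝ | 0 ≤ aff ν q x} = {x | aff (-ν) q x ≤ 0} := by
    ext x; simp [aff_neg]
  rw [this]; exact convex_affLE _ _

lemma interior_affLE {ν q : ℝ × ℝ} (hν : ν ≠ 0) {x : ℝ × ℝ}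
    (hx : x ∈ interior {x | aff ν q x ≤ 0}) : aff ν q x < 0 := by
  rcases Metric.isOpen_iff.mp isOpen_interior x hx with ⟨ε, hε, hball⟩
  have hsub : Metric.ball x ε ⊆ {x | aff ν q x ≤ 0} := hball.trans interior_subset
  have hν2 : 0 < ν.1 ^ 2 + ν.2 ^ 2 := by
    rcases Prod.mk.injEq .. ▸ (by exact fun h => hν (Prod.ext h.1 h.2) :
      ¬ (ν.1 = 0 ∧ ν.2 = 0)) with h
    by_contra hc
    push_neg at hc
    have h1 : ν.1 = 0 := by nlinarith [sq_nonneg ν.1, sq_nonneg ν.2]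
    have h2 : ν.2 = 0 := by nlinarith [sq_nonneg ν.1, sq_nonneg ν.2]
    exact hν (Prod.ext h1 h2)
  set t : ℝ := ε / (2 * (|ν.1| + |ν.2|) + 1) with ht
  have ht0 : 0 < t := by positivity
  set y : ℝ × ℝ := (x.1 - t * ν.2, x.2 + t * ν.1) with hy
  have hyball : y ∈ Metric.ball x ε := by
    rw [Metric.mem_ball, Prod.dist_eq]
    have h1 : dist y.1 x.1 = t * |ν.2| := by
      rw [Real.dist_eq]; simp [hy]; exact Or.inl ht0.le
    have h2 : dist y.2 x.2 = t * |ν.1| := by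
      rw [Real.dist_eq]; simp [hy]; exact Or.inl ht0.le
    have hlt : t * (|ν.1| + |ν.2|) < ε := by
      rw [ht]
      rw [div_mul_eq_mul_div, div_lt_iff₀ (by positivity)]
      nlinarith [abs_nonneg ν.1, abs_nonneg ν.2, hε]
    apply max_lt
    · rw [h1]; nlinarith [abs_nonneg ν.1, abs_nonneg ν.2]
    · rw [h2]; nlinarith [abs_nonneg ν.1, abs_nonneg ν.2]
  have hyle : aff ν q y ≤ 0 := hsub hyball
  have hcalc : aff ν q y = aff ν q x + t * (ν.1 ^ 2 + ν.2 ^ 2) := by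
    simp [aff, hy]; ring
  nlinarith

lemma interior_affGE {ν q : ℝ × ℝ} (hν : ν ≠ 0) {x : ℝ × ℝ}
    (hx : x ∈ interior {x | 0 ≤ aff ν q x}) : 0 < aff ν q x := by
  have : {x : ℝ × ℝ | 0 ≤ aff ν q x} = {x | aff (-ν) q x ≤ 0} := by ext x; simp [aff_neg]
  rw [this] at hx
  have := interior_affLE (by simpa using hν) hx
  rw [aff_neg] at this; linarith

lemma disj_of_sep {ν q : ℝ × ℝ} (hν : ν ≠ 0) {A B : Set (ℝ × ℝ)}
    (h1 : A ⊆ {x | aff ν q x ≤ 0}) (h2 : B ⊆ {x | 0 ≤ aff ν q x}) :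
    interior A ∩ interior B = ∅ := by
  ext x
  simp only [Set.mem_inter_iff, Set.mem_empty_iff_false, iff_false, not_and]
  intro hxA hxB
  have h1' := interior_affLE hν (interior_mono h1 hxA)
  have h2' := interior_affGE hν (interior_mono h2 hxB)
  linarith



lemma mem_hull3_iff (P0 P1 P2 x : ℝ × ℝ) :
    x ∈ convexHull ℝ {P0, P1, P2} ↔
      ∃ c0 c1 c2 : ℝ, 0 ≤ c0 ∧ 0 ≤ c1 ∧ 0 ≤ c2 ∧ c0 + c1 + c2 = 1 ∧
        x = c0 • P0 + c1 • P1 + c2 • P2 := by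
  have h1 : ({P0, P1, P2} : Set (ℝ × ℝ)) = insert P0 {P1, P2} := rfl
  rw [h1, convexHull_insert ⟨P1, by simp⟩, mem_convexJoin]
  constructor
  · rintro ⟨a, ha, b, hb, hab⟩
    rw [Set.mem_singleton_iff] at ha
    subst ha
    rw [convexHull_pair] at hb
    obtain ⟨u, v, hu, hv, huv, hw⟩ := hb
    obtain ⟨s, r, hs, hr, hsr, hx⟩ := hab
    refine ⟨s, r * u, r * v, hs, by positivity, by positivity, by nlinarith, ?_⟩
    rw [← hx, ← hw]
    module
  · rintro ⟨c0, c1, c2, h0, h1, h2, hsum, hx⟩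
    by_cases hc : c1 + c2 = 0
    · have hc1 : c1 = 0 := by linarith
      have hc2 : c2 = 0 := by linarith
      refine ⟨P0, rfl, P1, ?_, 1, 0, by norm_num, by norm_num, by ring, ?_⟩
      · rw [convexHull_pair]; exact ⟨1, 0, by norm_num, by norm_num, by ring, by module⟩
      · rw [hx, hc1, hc2]; have : c0 = 1 := by linarith
        rw [this]; module
    · have hcpos : 0 < c1 + c2 := lt_of_le_of_ne (by linarith) (Ne.symm hc)
      refine ⟨P0, rfl, (c1 / (c1 + c2)) • P1 + (c2 / (c1 + c2)) • P2, ?_, c0, c1 + c2,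
        h0, by linarith, by linarith, ?_⟩
      · rw [convexHull_pair]
        exact ⟨c1 / (c1 + c2), c2 / (c1 + c2), by positivity, by positivity,
          by field_simp, rfl⟩
      · rw [hx, smul_add, smul_smul, smul_smul,
          mul_div_cancel₀ _ (ne_of_gt hcpos), mul_div_cancel₀ _ (ne_of_gt hcpos)]
        module
  
lemma mem_hull3 {P0 P1 P2 : ℝ × ℝ} {c0 c1 c2 : ℝ} (h0 : 0 ≤ c0) (h1 : 0 ≤ c1)
    (h2 : 0 ≤ c2) (hsum : c0 + c1 + c2 = 1) :
    c0 • P0 + c1 • P1 + c2 • P2 ∈ convexHull ℝ {P0, P1, P2} :=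
  (mem_hull3_iff _ _ _ _).mpr ⟨c0, c1, c2, h0, h1, h2, hsum, rfl⟩

lemma mem_hull_insert_iff {S : Set (ℝ × ℝ)} (hS : S.Nonempty) (P x : ℝ × ℝ) :
    x ∈ convexHull ℝ (insert P S) ↔
      ∃ t : ℝ, 0 ≤ t ∧ t ≤ 1 ∧ ∃ y ∈ convexHull ℝ S, x = t • P + (1 - t) • y := by
  rw [convexHull_insert hS, mem_convexJoin]
  constructor
  · rintro ⟨a, ha, b, hb, s, r, hs, hr, hsr, hx⟩
    rw [Set.mem_singleton_iff] at ha; subst ha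
    exact ⟨s, hs, by linarith, b, hb, by rw [← hx]; rw [show 1 - s = r by linarith]⟩
  · rintro ⟨t, ht0, ht1, y, hy, hx⟩
    exact ⟨P, rfl, y, hy, t, 1 - t, ht0, by linarith, by ring, hx.symm⟩

lemma hull3_subset {P0 P1 P2 : ℝ × ℝ} {C : Set (ℝ × ℝ)} (hC : Convex ℝ C)
    (h0 : P0 ∈ C) (h1 : P1 ∈ C) (h2 : P2 ∈ C) :
    convexHull ℝ {P0, P1, P2} ⊆ C := by
  apply convexHull_min _ hC
  intro x hx
  rcases hx with h | h | h
  · rwa [h]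
  · rwa [h]
  · rwa [Set.mem_singleton_iff.mp h]




def det3 (t : Fin 3 → ℤ × ℤ) : ℤ :=
  ((t 1).1 - (t 0).1) * ((t 2).2 - (t 0).2) - ((t 1).2 - (t 0).2) * ((t 2).1 - (t 0).1)

def detZ (a b c : ℤ × ℤ) : ℤ :=
  (b.1 - a.1) * (c.2 - a.2) - (b.2 - a.2) * (c.1 - a.1)

def hullT (t : Fin 3 → ℤ × ℤ) : Set (ℝ × ℝ) :=
  convexHull ℝ ((fun p : ℤ × ℤ => ((p.1 : ℝ), (p.2 : ℝ))) '' Set.range t)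

def good (S : Set (ℝ × ℝ)) (L : List (Fin 3 → ℤ × ℤ)) : Prop :=
  (∀ t ∈ L, det3 t = 1 ∨ det3 t = -1) ∧
  (⋃ t ∈ L, hullT t) = S ∧
  L.Pairwise (fun t s => interior (hullT t) ∩ interior (hullT s) = ∅)

def mkT (a b c : ℤ × ℤ) : Fin 3 → ℤ × ℤ := ![a, b, c]

lemma range_mkT (a b c : ℤ × ℤ) : Set.range (mkT a b c) = {a, b, c} := by
  ext x
  constructor
  · rintro ⟨i, rfl⟩
    fin_cases i <;> simp [mkT]
  · rintro (h | h | h)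
    · exact ⟨0, h.symm⟩
    · exact ⟨1, h.symm⟩
    · exact ⟨2, (Set.mem_singleton_iff.mp h).symm⟩

lemma hullT_mkT (a b c : ℤ × ℤ) :
    hullT (mkT a b c) = convexHull ℝ {emb a, emb b, emb c} := by
  rw [hullT, range_mkT]
  congr 1
  simp only [Set.image_insert_eq, Set.image_singleton]
  rfl

lemma det3_mkT (a b c : ℤ × ℤ) : det3 (mkT a b c) = detZ a b c := by
  simp [det3, detZ, mkT]

lemma good_nil : good ∅ [] := by
  refine ⟨by simp, by simp, by simp⟩

lemma good_hull_subset {S : Set (ℝ × ℝ)} {L : List (Fin 3 → ℤ × ℤ)} (h : good S L)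
    {t : Fin 3 → ℤ × ℤ} (ht : t ∈ L) : hullT t ⊆ S := by
  rw [← h.2.1]
  intro x hx
  exact Set.mem_biUnion ht hx

lemma biUnion_append (L1 L2 : List (Fin 3 → ℤ × ℤ)) :
    (⋃ t ∈ (L1 ++ L2), hullT t) = (⋃ t ∈ L1, hullT t) ∪ (⋃ t ∈ L2, hullT t) := by
  ext x
  simp only [Set.mem_iUnion, Set.mem_union, List.mem_append]
  constructor
  · rintro ⟨t, h | h, hx⟩
    · exact Or.inl ⟨t, h, hx⟩
    · exact Or.inr ⟨t, h, hx⟩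
  · rintro (⟨t, h, hx⟩ | ⟨t, h, hx⟩)
    · exact ⟨t, Or.inl h, hx⟩
    · exact ⟨t, Or.inr h, hx⟩

lemma good_single {a b c : ℤ × ℤ} (h : detZ a b c = 1 ∨ detZ a b c = -1) :
    good (convexHull ℝ {emb a, emb b, emb c}) [mkT a b c] := by
  refine ⟨?_, ?_, ?_⟩
  · intro t ht
    simp only [List.mem_singleton] at ht
    subst ht
    rw [det3_mkT]; exact h
  · simp [hullT_mkT]
  · simp

lemma good_append {S1 S2 : Set (ℝ × ℝ)} {L1 L2 : List (Fin 3 → ℤ × ℤ)}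
    (h1 : good S1 L1) (h2 : good S2 L2)
    (hdisj : ∀ t ∈ L1, ∀ s ∈ L2, interior (hullT t) ∩ interior (hullT s) = ∅) :
    good (S1 ∪ S2) (L1 ++ L2) := by
  refine ⟨?_, ?_, ?_⟩
  · intro t ht
    rcases List.mem_append.mp ht with h | h
    · exact h1.1 t h
    · exact h2.1 t h
  · rw [biUnion_append, h1.2.1, h2.2.1]
  · exact List.pairwise_append.mpr ⟨h1.2.2, h2.2.2, hdisj⟩




lemma latticePoint (v0 v1 v2 : ℤ × ℤ) (hD : detZ v0 v1 v2 ≠ 0)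
    (hD1 : detZ v0 v1 v2 ≠ 1) (hDm1 : detZ v0 v1 v2 ≠ -1) :
    ∃ (z : ℤ × ℤ) (l0 l1 l2 : ℚ), 0 ≤ l0 ∧ 0 ≤ l1 ∧ 0 ≤ l2 ∧
      l0 < 1 ∧ l1 < 1 ∧ l2 < 1 ∧ l0 + l1 + l2 = 1 ∧
      (z.1 : ℚ) = l0 * v0.1 + l1 * v1.1 + l2 * v2.1 ∧
      (z.2 : ℚ) = l0 * v0.2 + l1 * v1.2 + l2 * v2.2 ∧
      z ≠ v0 ∧ z ≠ v1 ∧ z ≠ v2 := by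
  set a1 : ℤ := v1.1 - v0.1 with ha1
  set a2 : ℤ := v1.2 - v0.2 with ha2
  set b1 : ℤ := v2.1 - v0.1 with hb1
  set b2 : ℤ := v2.2 - v0.2 with hb2
  have hDdef : detZ v0 v1 v2 = a1 * b2 - a2 * b1 := rfl
  set D : ℤ := a1 * b2 - a2 * b1 with hDd
  rw [hDdef] at hD hD1 hDm1
  -- Step 1: find w not in the lattice spanned by a, b
  have hstep : ¬ ∀ w : ℤ × ℤ, ∃ m n : ℤ, w.1 = m * a1 + n * b1 ∧ w.2 = m * a2 + n * b2 := by
    intro hall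
    obtain ⟨m1, n1, e1, e2⟩ := hall (1, 0)
    obtain ⟨m2, n2, e3, e4⟩ := hall (0, 1)
    simp only at e1 e2 e3 e4
    have key : D * (m1 * n2 - n1 * m2) = 1 := by
      rw [hDd]
      linear_combination (-(m2 * a2) - n2 * b2) * e1 + (m1 * a2 + n1 * b2) * e3 - e4
    rcases Int.isUnit_iff.mp (IsUnit.of_mul_eq_one _ key) with h | h
    · exact hD1 h
    · exact hDm1 h
  push_neg at hstep
  obtain ⟨w, hw⟩ := hstep
  have hDq : (D : ℚ) ≠ 0 := by exact_mod_cast hD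
  set σ : ℚ := ((w.1 * b2 - w.2 * b1 : ℤ) : ℚ) / (D : ℚ) with hσ
  set τ : ℚ := ((a1 * w.2 - a2 * w.1 : ℤ) : ℚ) / (D : ℚ) with hτ
  have hw1 : (w.1 : ℚ) = σ * a1 + τ * b1 := by
    rw [hσ, hτ, div_mul_eq_mul_div, div_mul_eq_mul_div, ← add_div,
      eq_div_iff hDq, hDd]
    push_cast; ring
  have hw2 : (w.2 : ℚ) = σ * a2 + τ * b2 := by
    rw [hσ, hτ, div_mul_eq_mul_div, div_mul_eq_mul_div, ← add_div,
      eq_div_iff hDq, hDd]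
    push_cast; ring
  set m : ℤ := ⌊σ⌋ with hm
  set n : ℤ := ⌊τ⌋ with hn
  set α : ℚ := Int.fract σ with hα
  set β : ℚ := Int.fract τ with hβ
  have hα0 : 0 ≤ α := Int.fract_nonneg σ
  have hβ0 : 0 ≤ β := Int.fract_nonneg τ
  have hα1 : α < 1 := Int.fract_lt_one σ
  have hβ1 : β < 1 := Int.fract_lt_one τ
  have hαd : α = σ - m := rfl
  have hβd : β = τ - n := rfl
  -- independence over ℚ
  have indep : ∀ x y : ℚ, x * a1 + y * b1 = 0 → x * a2 + y * b2 = 0 → x = 0 ∧ y = 0 := by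
    intro x y h1 h2
    have hx : x * D = 0 := by push_cast [hDd]; linear_combination (b2 : ℚ) * h1 - (b1 : ℚ) * h2
    have hy : y * D = 0 := by push_cast [hDd]; linear_combination (a1 : ℚ) * h2 - (a2 : ℚ) * h1
    exact ⟨by rcases mul_eq_zero.mp hx with h | h; exact h; exact absurd h hDq,
      by rcases mul_eq_zero.mp hy with h | h; exact h; exact absurd h hDq⟩
  have hαβ : ¬(α = 0 ∧ β = 0) := by
    rintro ⟨h1, h2⟩
    have hσm : σ = (m : ℚ) := by rw [hαd] at h1; linarith
    have hτn : τ = (n : ℚ) := by rw [hβd] at h2; linarith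
    have e1 : w.1 = m * a1 + n * b1 := by
      have : (w.1 : ℚ) = ((m * a1 + n * b1 : ℤ) : ℚ) := by
        push_cast; rw [hw1, hσm, hτn]
      exact_mod_cast this
    have e2 : w.2 = m * a2 + n * b2 := by
      have : (w.2 : ℚ) = ((m * a2 + n * b2 : ℤ) : ℚ) := by
        push_cast; rw [hw2, hσm, hτn]
      exact_mod_cast this
    exact hw m n e1 e2
  have hαβpos : 0 < α + β := by
    rcases (not_and_or.mp hαβ) with h | h
    · have := lt_of_le_of_ne hα0 (Ne.symm h); linarith
    · have := lt_of_le_of_ne hβ0 (Ne.symm h); linarith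
  set p1 : ℤ := w.1 - m * a1 - n * b1 with hp1d
  set p2 : ℤ := w.2 - m * a2 - n * b2 with hp2d
  have hp1 : (p1 : ℚ) = α * a1 + β * b1 := by
    rw [hp1d]; push_cast; rw [hαd, hβd]; linear_combination hw1
  have hp2 : (p2 : ℚ) = α * a2 + β * b2 := by
    rw [hp2d]; push_cast; rw [hαd, hβd]; linear_combination hw2
  have ha1q : (a1 : ℚ) = (v1.1 : ℚ) - (v0.1 : ℚ) := by rw [ha1]; push_cast; ring
  have ha2q : (a2 : ℚ) = (v1.2 : ℚ) - (v0.2 : ℚ) := by rw [ha2]; push_cast; ring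
  have hb1q : (b1 : ℚ) = (v2.1 : ℚ) - (v0.1 : ℚ) := by rw [hb1]; push_cast; ring
  have hb2q : (b2 : ℚ) = (v2.2 : ℚ) - (v0.2 : ℚ) := by rw [hb2]; push_cast; ring
  rcases le_or_gt (α + β) 1 with hcase | hcase
  · -- z = v0 + p
    refine ⟨(v0.1 + p1, v0.2 + p2), 1 - α - β, α, β, by linarith, hα0, hβ0,
      by linarith, hα1, hβ1, by ring, ?_, ?_, ?_, ?_, ?_⟩
    · push_cast
      rw [hp1, ha1q, hb1q]; ring
    · push_cast
      rw [hp2, ha2q, hb2q]; ring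
    · intro h
      rw [Prod.ext_iff] at h
      simp only at h
      have h1 : (p1 : ℚ) = 0 := by exact_mod_cast (by linarith [h.1] : p1 = 0)
      have h2 : (p2 : ℚ) = 0 := by exact_mod_cast (by linarith [h.2] : p2 = 0)
      rw [hp1] at h1; rw [hp2] at h2
      exact hαβ (indep α β h1 h2)
    · intro h
      rw [Prod.ext_iff] at h
      simp only at h
      have h1 : (p1 : ℚ) = a1 := by
        have : p1 = a1 := by rw [ha1]; omega
        exact_mod_cast this
      have h2 : (p2 : ℚ) = a2 := by
        have : p2 = a2 := by rw [ha2]; omega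
        exact_mod_cast this
      have e1 : (α - 1) * a1 + β * b1 = 0 := by linear_combination h1 - hp1
      have e2 : (α - 1) * a2 + β * b2 = 0 := by linear_combination h2 - hp2
      have := (indep _ _ e1 e2).1
      linarith
    · intro h
      rw [Prod.ext_iff] at h
      simp only at h
      have h1 : (p1 : ℚ) = b1 := by
        have : p1 = b1 := by rw [hb1]; omega
        exact_mod_cast this
      have h2 : (p2 : ℚ) = b2 := by
        have : p2 = b2 := by rw [hb2]; omega
        exact_mod_cast this
      have e1 : α * a1 + (β - 1) * b1 = 0 := by linear_combination h1 - hp1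
      have e2 : α * a2 + (β - 1) * b2 = 0 := by linear_combination h2 - hp2
      have := (indep _ _ e1 e2).2
      linarith
  · -- z = v0 + a + b - p
    refine ⟨(v0.1 + a1 + b1 - p1, v0.2 + a2 + b2 - p2), α + β - 1, 1 - α, 1 - β,
      by linarith, by linarith, by linarith, by linarith, by linarith, by linarith,
      by ring, ?_, ?_, ?_, ?_, ?_⟩
    · push_cast
      rw [hp1, ha1q, hb1q]; ring
    · push_cast
      rw [hp2, ha2q, hb2q]; ring
    · intro h
      rw [Prod.ext_iff] at h
      simp only at h
      have h1 : (p1 : ℚ) = (a1 : ℚ) + b1 := by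
        have : p1 = a1 + b1 := by omega
        exact_mod_cast this
      have h2 : (p2 : ℚ) = (a2 : ℚ) + b2 := by
        have : p2 = a2 + b2 := by omega
        exact_mod_cast this
      have e1 : (α - 1) * a1 + (β - 1) * b1 = 0 := by linear_combination h1 - hp1
      have e2 : (α - 1) * a2 + (β - 1) * b2 = 0 := by linear_combination h2 - hp2
      have := (indep _ _ e1 e2).1
      linarith
    · intro h
      rw [Prod.ext_iff] at h
      simp only at h
      have h1 : (p1 : ℚ) = b1 := by
        have : p1 = b1 := by rw [ha1, hb1] at *; omega
        exact_mod_cast this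
      have h2 : (p2 : ℚ) = b2 := by
        have : p2 = b2 := by rw [ha2, hb2] at *; omega
        exact_mod_cast this
      have e1 : α * a1 + (β - 1) * b1 = 0 := by linear_combination h1 - hp1
      have e2 : α * a2 + (β - 1) * b2 = 0 := by linear_combination h2 - hp2
      have := (indep _ _ e1 e2).1
      linarith
    · intro h
      rw [Prod.ext_iff] at h
      simp only at h
      have h1 : (p1 : ℚ) = a1 := by
        have : p1 = a1 := by rw [ha1, hb1] at *; omega
        exact_mod_cast this
      have h2 : (p2 : ℚ) = a2 := by
        have : p2 = a2 := by rw [ha2, hb2] at *; omega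
        exact_mod_cast this
      have e1 : (α - 1) * a1 + β * b1 = 0 := by linear_combination h1 - hp1
      have e2 : (α - 1) * a2 + β * b2 = 0 := by linear_combination h2 - hp2
      have := (indep _ _ e1 e2).2
      linarith





lemma piece0 {P0 P1 P2 Z x : ℝ × ℝ} {m0 m1 m2 μ0 μ1 μ2 : ℝ}
    (hμ0 : 0 ≤ μ0) (hμ1 : 0 ≤ μ1) (hμ2 : 0 ≤ μ2)
    (hms : m0 + m1 + m2 = 1) (hμs : μ0 + μ1 + μ2 = 1)
    (hZ : Z = m0 • P0 + m1 • P1 + m2 • P2) (hx : x = μ0 • P0 + μ1 • P1 + μ2 • P2)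
    (hm0 : 0 < m0) (c1 : μ0 * m1 ≤ μ1 * m0) (c2 : μ0 * m2 ≤ μ2 * m0) :
    x ∈ convexHull ℝ {Z, P1, P2} := by
  have key : μ0 / m0 * m0 = μ0 := div_mul_cancel₀ μ0 (ne_of_gt hm0)
  refine (mem_hull3_iff _ _ _ _).mpr ⟨μ0 / m0, μ1 - μ0 / m0 * m1, μ2 - μ0 / m0 * m2,
    div_nonneg hμ0 (le_of_lt hm0), ?_, ?_, ?_, ?_⟩
  · rw [sub_nonneg, div_mul_eq_mul_div, div_le_iff₀ hm0]; exact c1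
  · rw [sub_nonneg, div_mul_eq_mul_div, div_le_iff₀ hm0]; exact c2
  · linear_combination key - (μ0 / m0) * hms + hμs
  · rw [hx, hZ]
    match_scalars
    · linear_combination -key
    · ring
    · ring

lemma argmin3 {m0 m1 m2 μ0 μ1 μ2 : ℝ} (hm0 : 0 ≤ m0) (hm1 : 0 ≤ m1) (hm2 : 0 ≤ m2)
    (hμ0 : 0 ≤ μ0) (hμ1 : 0 ≤ μ1) (hμ2 : 0 ≤ μ2)
    (hms : m0 + m1 + m2 = 1) :
    (0 < m0 ∧ μ0 * m1 ≤ μ1 * m0 ∧ μ0 * m2 ≤ μ2 * m0) ∨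
    (0 < m1 ∧ μ1 * m0 ≤ μ0 * m1 ∧ μ1 * m2 ≤ μ2 * m1) ∨
    (0 < m2 ∧ μ2 * m0 ≤ μ0 * m2 ∧ μ2 * m1 ≤ μ1 * m2) := by
  rcases eq_or_lt_of_le hm0 with h0 | h0
  · rcases eq_or_lt_of_le hm1 with h1 | h1
    · right; right
      constructor
      · linarith
      constructor <;> nlinarith
    · rcases eq_or_lt_of_le hm2 with h2 | h2
      · right; left
        exact ⟨h1, by nlinarith, by nlinarith⟩
      · rcases le_or_gt (μ1 * m2) (μ2 * m1) with hc | hc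
        · right; left; exact ⟨h1, by nlinarith, hc⟩
        · right; right; exact ⟨h2, by nlinarith, le_of_lt hc⟩
  · rcases eq_or_lt_of_le hm1 with h1 | h1
    · rcases eq_or_lt_of_le hm2 with h2 | h2
      · left; exact ⟨h0, by nlinarith, by nlinarith⟩
      · rcases le_or_gt (μ0 * m2) (μ2 * m0) with hc | hc
        · left; exact ⟨h0, by nlinarith, hc⟩
        · right; right; exact ⟨h2, le_of_lt hc, by nlinarith⟩
    · rcases eq_or_lt_of_le hm2 with h2 | h2
      · rcases le_or_gt (μ0 * m1) (μ1 * m0) with hc | hc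
        · left; exact ⟨h0, hc, by nlinarith⟩
        · right; left; exact ⟨h1, le_of_lt hc, by nlinarith⟩
      · -- all positive
        rcases le_or_gt (μ0 * m1) (μ1 * m0) with hc | hc
        · rcases le_or_gt (μ0 * m2) (μ2 * m0) with hd | hd
          · left; exact ⟨h0, hc, hd⟩
          · right; right
            refine ⟨h2, le_of_lt hd, ?_⟩
            nlinarith
        · rcases le_or_gt (μ1 * m2) (μ2 * m1) with hd | hd
          · right; left; exact ⟨h1, le_of_lt hc, hd⟩
          · right; right
            refine ⟨h2, ?_, le_of_lt hd⟩
            nlinarith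

lemma cover3 {P0 P1 P2 Z x : ℝ × ℝ} {m0 m1 m2 : ℝ}
    (hm0 : 0 ≤ m0) (hm1 : 0 ≤ m1) (hm2 : 0 ≤ m2) (hms : m0 + m1 + m2 = 1)
    (hZ : Z = m0 • P0 + m1 • P1 + m2 • P2)
    (hx : x ∈ convexHull ℝ {P0, P1, P2}) :
    (0 < m0 ∧ x ∈ convexHull ℝ {Z, P1, P2}) ∨
    (0 < m1 ∧ x ∈ convexHull ℝ {P0, Z, P2}) ∨
    (0 < m2 ∧ x ∈ convexHull ℝ {P0, P1, Z}) := by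
  obtain ⟨μ0, μ1, μ2, hμ0, hμ1, hμ2, hμs, hxe⟩ := (mem_hull3_iff _ _ _ _).mp hx
  rcases argmin3 hm0 hm1 hm2 hμ0 hμ1 hμ2 hms with
    ⟨hp, c1, c2⟩ | ⟨hp, c1, c2⟩ | ⟨hp, c1, c2⟩
  · exact Or.inl ⟨hp, piece0 hμ0 hμ1 hμ2 hms hμs hZ hxe hp c1 c2⟩
  · right; left
    refine ⟨hp, ?_⟩
    have hZ1 : Z = m1 • P1 + m0 • P0 + m2 • P2 := by rw [hZ]; module
    have hx1 : x = μ1 • P1 + μ0 • P0 + μ2 • P2 := by rw [hxe]; module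
    have h := piece0 hμ1 hμ0 hμ2 (by linarith) (by linarith) hZ1 hx1 hp c1 c2
    rwa [Set.insert_comm] at h
  · right; right
    refine ⟨hp, ?_⟩
    have hZ1 : Z = m2 • P2 + m0 • P0 + m1 • P1 := by rw [hZ]; module
    have hx1 : x = μ2 • P2 + μ0 • P0 + μ1 • P1 := by rw [hxe]; module
    have h := piece0 hμ2 hμ0 hμ1 (by linarith) (by linarith) hZ1 hx1 hp c1 c2
    rwa [Set.insert_comm, show ({Z, P1} : Set (ℝ × ℝ)) = {P1, Z} from Set.pair_comm _ _] at h

lemma aff_vals {P Q R Z : ℝ × ℝ} {a b c E : ℝ} (hsum : a + b + c = 1)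
    (hZ : Z = a • P + b • Q + c • R) (hE : E = crossR (Q - P) (R - P)) :
    aff (R - Z) Z P = b * E ∧ aff (R - Z) Z Q = -(a * E) := by
  have hc : c = 1 - a - b := by linarith
  subst hc hZ hE
  constructor <;>
  · simp only [aff, crossR, Prod.fst_sub, Prod.snd_sub, Prod.fst_add, Prod.snd_add,
      Prod.smul_fst, Prod.smul_snd, smul_eq_mul]
    ring

lemma aff_self (ν q : ℝ × ℝ) : aff ν q q = 0 := by simp [aff]

lemma aff_base (q w : ℝ × ℝ) : aff (w - q) q w = 0 := by
  simp [aff, Prod.fst_sub, Prod.snd_sub]; ring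

lemma crossR_emb (a b c : ℤ × ℤ) :
    crossR (emb b - emb a) (emb c - emb a) = ((detZ a b c : ℤ) : ℝ) := by
  simp only [crossR, emb, detZ, Prod.fst_sub, Prod.snd_sub]
  push_cast; ring

lemma sep_hulls {A0 A1 A2 B0 B1 B2 ν q : ℝ × ℝ} (hν : ν ≠ 0)
    (ha0 : aff ν q A0 ≤ 0) (ha1 : aff ν q A1 ≤ 0) (ha2 : aff ν q A2 ≤ 0)
    (hb0 : 0 ≤ aff ν q B0) (hb1 : 0 ≤ aff ν q B1) (hb2 : 0 ≤ aff ν q B2) :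
    interior (convexHull ℝ {A0, A1, A2}) ∩ interior (convexHull ℝ {B0, B1, B2}) = ∅ :=
  disj_of_sep hν (hull3_subset (convex_affLE _ _) ha0 ha1 ha2)
    (hull3_subset (convex_affGE _ _) hb0 hb1 hb2)

set_option maxHeartbeats 1000000 in
lemma lemB : ∀ (n : ℕ) (v0 v1 v2 : ℤ × ℤ), detZ v0 v1 v2 ≠ 0 →
    (detZ v0 v1 v2).natAbs ≤ n →
    ∃ L, good (convexHull ℝ {emb v0, emb v1, emb v2}) L := by
  intro n
  induction n with
  | zero =>
    intro v0 v1 v2 hD hle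
    exact absurd (Int.natAbs_eq_zero.mp (Nat.le_zero.mp hle)) hD
  | succ n ih =>
    intro v0 v1 v2 hD hle
    by_cases hbasic : detZ v0 v1 v2 = 1 ∨ detZ v0 v1 v2 = -1
    · exact ⟨[mkT v0 v1 v2], good_single hbasic⟩
    push_neg at hbasic
    obtain ⟨z, l0, l1, l2, h00, h10, h20, h01, h11, h21, hsum, hc1, hc2, hz0, hz1, hz2⟩ :=
      latticePoint v0 v1 v2 hD hbasic.1 hbasic.2
    set P0 := emb v0 with hP0
    set P1 := emb v1 with hP1
    set P2 := emb v2 with hP2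
    set Z := emb z with hZ
    set m0 : ℝ := (l0 : ℝ) with hm0d
    set m1 : ℝ := (l1 : ℝ) with hm1d
    set m2 : ℝ := (l2 : ℝ) with hm2d
    have hm0 : 0 ≤ m0 := by rw [hm0d]; exact_mod_cast h00
    have hm1 : 0 ≤ m1 := by rw [hm1d]; exact_mod_cast h10
    have hm2 : 0 ≤ m2 := by rw [hm2d]; exact_mod_cast h20
    have hm0' : m0 < 1 := by rw [hm0d]; exact_mod_cast h01
    have hm1' : m1 < 1 := by rw [hm1d]; exact_mod_cast h11
    have hm2' : m2 < 1 := by rw [hm2d]; exact_mod_cast h21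
    have hms : m0 + m1 + m2 = 1 := by
      rw [hm0d, hm1d, hm2d]; exact_mod_cast hsum
    have hZe : Z = m0 • P0 + m1 • P1 + m2 • P2 := by
      have e1 : ((z.1 : ℚ) : ℝ) = ((l0 * v0.1 + l1 * v1.1 + l2 * v2.1 : ℚ) : ℝ) := by
        exact_mod_cast congrArg (fun q : ℚ => (q : ℝ)) hc1
      have e2 : ((z.2 : ℚ) : ℝ) = ((l0 * v0.2 + l1 * v1.2 + l2 * v2.2 : ℚ) : ℝ) := by
        exact_mod_cast congrArg (fun q : ℚ => (q : ℝ)) hc2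
      push_cast at e1 e2
      apply Prod.ext
      · simpa [hZ, hP0, hP1, hP2, emb, hm0d, hm1d, hm2d, Prod.fst_add, Prod.smul_fst,
          smul_eq_mul] using e1
      · simpa [hZ, hP0, hP1, hP2, emb, hm0d, hm1d, hm2d, Prod.snd_add, Prod.smul_snd,
          smul_eq_mul] using e2
    have hl2eq : l2 = 1 - l0 - l1 := by linarith
    -- determinants of the three subtriangles
    have hD0q : ((detZ z v1 v2 : ℤ) : ℚ) = l0 * ((detZ v0 v1 v2 : ℤ) : ℚ) := by
      push_cast [detZ]
      rw [hc1, hc2, hl2eq]; ring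
    have hD1q : ((detZ v0 z v2 : ℤ) : ℚ) = l1 * ((detZ v0 v1 v2 : ℤ) : ℚ) := by
      push_cast [detZ]
      rw [hc1, hc2, hl2eq]; ring
    have hD2q : ((detZ v0 v1 z : ℤ) : ℚ) = l2 * ((detZ v0 v1 v2 : ℤ) : ℚ) := by
      push_cast [detZ]
      rw [hc1, hc2, hl2eq]; ring
    have hDabs : (0 : ℚ) < |((detZ v0 v1 v2 : ℤ) : ℚ)| := by
      rw [abs_pos]; exact_mod_cast hD
    have habs : ∀ d : ℤ, ∀ l : ℚ, 0 ≤ l → l < 1 →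
        ((d : ℚ) = l * ((detZ v0 v1 v2 : ℤ) : ℚ)) → d.natAbs ≤ n := by
      intro d l hl0 hl1 hdq
      have h1 : |(d : ℚ)| < |((detZ v0 v1 v2 : ℤ) : ℚ)| := by
        rw [hdq, abs_mul, abs_of_nonneg hl0]
        nlinarith
      have h2 : |d| < |detZ v0 v1 v2| := by exact_mod_cast h1
      rw [Int.abs_eq_natAbs, Int.abs_eq_natAbs] at h2
      have h3 : d.natAbs < (detZ v0 v1 v2).natAbs := by exact_mod_cast h2
      omega
    -- the three subtriangulations
    have key0 : ∃ L, good (if l0 = 0 then (∅ : Set (ℝ × ℝ))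
        else convexHull ℝ {Z, P1, P2}) L := by
      by_cases h : l0 = 0
      · rw [if_pos h]; exact ⟨[], good_nil⟩
      · rw [if_neg h]
        have hD0 : detZ z v1 v2 ≠ 0 := by
          intro hzero
          rw [hzero] at hD0q
          push_cast at hD0q
          rcases mul_eq_zero.mp hD0q.symm with hh | hh
          · exact h hh
          · exact hD (by exact_mod_cast hh)
        exact ih z v1 v2 hD0 (habs _ l0 h00 h01 hD0q)
    have key1 : ∃ L, good (if l1 = 0 then (∅ : Set (ℝ × ℝ))
        else convexHull ℝ {P0, Z, P2}) L := by
      by_cases h : l1 = 0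
      · rw [if_pos h]; exact ⟨[], good_nil⟩
      · rw [if_neg h]
        have hD1 : detZ v0 z v2 ≠ 0 := by
          intro hzero
          rw [hzero] at hD1q
          push_cast at hD1q
          rcases mul_eq_zero.mp hD1q.symm with hh | hh
          · exact h hh
          · exact hD (by exact_mod_cast hh)
        exact ih v0 z v2 hD1 (habs _ l1 h10 h11 hD1q)
    have key2 : ∃ L, good (if l2 = 0 then (∅ : Set (ℝ × ℝ))
        else convexHull ℝ {P0, P1, Z}) L := by
      by_cases h : l2 = 0
      · rw [if_pos h]; exact ⟨[], good_nil⟩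
      · rw [if_neg h]
        have hD2 : detZ v0 v1 z ≠ 0 := by
          intro hzero
          rw [hzero] at hD2q
          push_cast at hD2q
          rcases mul_eq_zero.mp hD2q.symm with hh | hh
          · exact h hh
          · exact hD (by exact_mod_cast hh)
        exact ih v0 v1 z hD2 (habs _ l2 h20 h21 hD2q)
    obtain ⟨L0, hL0⟩ := key0
    obtain ⟨L1, hL1⟩ := key1
    obtain ⟨L2, hL2⟩ := key2
    -- subtriangles contained in big triangle
    have hZT : Z ∈ convexHull ℝ {P0, P1, P2} := by
      rw [hZe]; exact mem_hull3 hm0 hm1 hm2 hms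
    have hP0T : P0 ∈ convexHull ℝ {P0, P1, P2} := subset_convexHull _ _ (by simp)
    have hP1T : P1 ∈ convexHull ℝ {P0, P1, P2} := subset_convexHull _ _ (by simp)
    have hP2T : P2 ∈ convexHull ℝ {P0, P1, P2} := subset_convexHull _ _ (by simp)
    have hT0sub : convexHull ℝ {Z, P1, P2} ⊆ convexHull ℝ {P0, P1, P2} :=
      hull3_subset (convex_convexHull _ _) hZT hP1T hP2T
    have hT1sub : convexHull ℝ {P0, Z, P2} ⊆ convexHull ℝ {P0, P1, P2} :=
      hull3_subset (convex_convexHull _ _) hP0T hZT hP2T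
    have hT2sub : convexHull ℝ {P0, P1, Z} ⊆ convexHull ℝ {P0, P1, P2} :=
      hull3_subset (convex_convexHull _ _) hP0T hP1T hZT
    have hS0sub : (if l0 = 0 then (∅ : Set (ℝ × ℝ)) else convexHull ℝ {Z, P1, P2})
        ⊆ convexHull ℝ {Z, P1, P2} := by split_ifs <;> simp
    have hS1sub : (if l1 = 0 then (∅ : Set (ℝ × ℝ)) else convexHull ℝ {P0, Z, P2})
        ⊆ convexHull ℝ {P0, Z, P2} := by split_ifs <;> simp
    have hS2sub : (if l2 = 0 then (∅ : Set (ℝ × ℝ)) else convexHull ℝ {P0, P1, Z})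
        ⊆ convexHull ℝ {P0, P1, Z} := by split_ifs <;> simp
    -- separating lines; E is the real determinant
    set E : ℝ := crossR (P1 - P0) (P2 - P0) with hEd
    have hEdet : E = ((detZ v0 v1 v2 : ℤ) : ℝ) := crossR_emb v0 v1 v2
    have hEne : E ≠ 0 := by rw [hEdet]; exact_mod_cast hD
    have hZP0 : Z ≠ P0 := fun h => hz0 (emb_inj h)
    have hZP1 : Z ≠ P1 := fun h => hz1 (emb_inj h)
    have hZP2 : Z ≠ P2 := fun h => hz2 (emb_inj h)
    -- pair (0,1) : line through Z and P2
    have hv01 := aff_vals (P := P0) (Q := P1) (R := P2) (Z := Z) hms hZe hEd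
    have hv02 := aff_vals (P := P0) (Q := P2) (R := P1) (Z := Z) (a := m0) (b := m2) (c := m1)
      (E := -E) (by linarith) (by rw [hZe]; module) (by rw [hEd]; simp [crossR]; ring)
    have hv12 := aff_vals (P := P1) (Q := P2) (R := P0) (Z := Z) (a := m1) (b := m2) (c := m0)
      (E := E) (by linarith) (by rw [hZe]; module) (by rw [hEd]; simp [crossR]; ring)
    have hd01 : interior (convexHull ℝ {Z, P1, P2}) ∩
        interior (convexHull ℝ {P0, Z, P2}) = ∅ := by
      have hν : P2 - Z ≠ 0 := sub_ne_zero.mpr (Ne.symm hZP2)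
      rcases lt_or_gt_of_ne hEne with hE | hE
      · rw [Set.inter_comm]
        exact sep_hulls hν (by rw [hv01.1]; nlinarith) (le_of_eq (aff_self _ _))
          (le_of_eq (aff_base _ _)) (le_of_eq (aff_self _ _).symm)
          (by rw [hv01.2]; nlinarith) (le_of_eq (aff_base _ _).symm)
      · exact sep_hulls hν (le_of_eq (aff_self _ _)) (by rw [hv01.2]; nlinarith)
          (le_of_eq (aff_base _ _)) (by rw [hv01.1]; nlinarith)
          (le_of_eq (aff_self _ _).symm) (le_of_eq (aff_base _ _).symm)
    have hd02 : interior (convexHull ℝ {Z, P1, P2}) ∩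
        interior (convexHull ℝ {P0, P1, Z}) = ∅ := by
      have hν : P1 - Z ≠ 0 := sub_ne_zero.mpr (Ne.symm hZP1)
      rcases lt_or_gt_of_ne hEne with hE | hE
      · exact sep_hulls hν (le_of_eq (aff_self _ _)) (le_of_eq (aff_base _ _))
          (by rw [hv02.2]; nlinarith) (by rw [hv02.1]; nlinarith)
          (le_of_eq (aff_base _ _).symm) (le_of_eq (aff_self _ _).symm)
      · rw [Set.inter_comm]
        exact sep_hulls hν (by rw [hv02.1]; nlinarith) (le_of_eq (aff_base _ _))
          (le_of_eq (aff_self _ _)) (le_of_eq (aff_self _ _).symm)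
          (le_of_eq (aff_base _ _).symm) (by rw [hv02.2]; nlinarith)
    have hd12 : interior (convexHull ℝ {P0, Z, P2}) ∩
        interior (convexHull ℝ {P0, P1, Z}) = ∅ := by
      have hν : P0 - Z ≠ 0 := sub_ne_zero.mpr (Ne.symm hZP0)
      rcases lt_or_gt_of_ne hEne with hE | hE
      · rw [Set.inter_comm]
        exact sep_hulls hν (le_of_eq (aff_base _ _)) (by rw [hv12.1]; nlinarith)
          (le_of_eq (aff_self _ _)) (le_of_eq (aff_base _ _).symm)
          (le_of_eq (aff_self _ _).symm) (by rw [hv12.2]; nlinarith)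
      · exact sep_hulls hν (le_of_eq (aff_base _ _)) (le_of_eq (aff_self _ _))
          (by rw [hv12.2]; nlinarith) (le_of_eq (aff_base _ _).symm)
          (by rw [hv12.1]; nlinarith) (le_of_eq (aff_self _ _).symm)
    refine ⟨L0 ++ L1 ++ L2, ?_, ?_, ?_⟩
    · intro t ht
      rcases List.mem_append.mp ht with ht' | ht'
      · rcases List.mem_append.mp ht' with h | h
        · exact hL0.1 t h
        · exact hL1.1 t h
      · exact hL2.1 t ht'
    · rw [biUnion_append, biUnion_append, hL0.2.1, hL1.2.1, hL2.2.1]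
      apply subset_antisymm
      · apply Set.union_subset
        apply Set.union_subset
        · exact hS0sub.trans hT0sub
        · exact hS1sub.trans hT1sub
        · exact hS2sub.trans hT2sub
      · intro x hx
        rcases cover3 hm0 hm1 hm2 hms hZe hx with ⟨hp, hm⟩ | ⟨hp, hm⟩ | ⟨hp, hm⟩
        · left; left
          rw [if_neg (by intro h; rw [hm0d, h] at hp; simp at hp)]
          exact hm
        · left; right
          rw [if_neg (by intro h; rw [hm1d, h] at hp; simp at hp)]
          exact hm
        · right
          rw [if_neg (by intro h; rw [hm2d, h] at hp; simp at hp)]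
          exact hm
    · apply List.pairwise_append.mpr
      refine ⟨List.pairwise_append.mpr ⟨hL0.2.2, hL1.2.2, ?_⟩, hL2.2.2, ?_⟩
      · intro t ht s hs
        apply Set.eq_empty_of_subset_empty
        rw [← hd01]
        exact Set.inter_subset_inter
          (interior_mono ((good_hull_subset hL0 ht).trans hS0sub))
          (interior_mono ((good_hull_subset hL1 hs).trans hS1sub))
      · intro t ht s hs
        rcases List.mem_append.mp ht with h | h
        · apply Set.eq_empty_of_subset_empty
          rw [← hd02]
          exact Set.inter_subset_inter
            (interior_mono ((good_hull_subset hL0 h).trans hS0sub))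
            (interior_mono ((good_hull_subset hL2 hs).trans hS2sub))
        · apply Set.eq_empty_of_subset_empty
          rw [← hd12]
          exact Set.inter_subset_inter
            (interior_mono ((good_hull_subset hL1 h).trans hS1sub))
            (interior_mono ((good_hull_subset hL2 hs).trans hS2sub))

-- ---------- helpers for polygon induction ----------

def crossZ (d e : ℤ × ℤ) : ℤ := d.1 * e.2 - d.2 * e.1

lemma detZ_sub (p q r : ℤ × ℤ) : detZ p q r = crossZ (q - p) (r - p) := by
  simp [detZ, crossZ, Prod.fst_sub, Prod.snd_sub]

lemma crossZ_skew (d e : ℤ × ℤ) : crossZ d e = - crossZ e d := by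
  simp [crossZ]; ring

lemma aff_eq_crossR (ν q x : ℝ × ℝ) : aff ν q x = crossR ν (x - q) := by
  simp [aff, crossR, Prod.fst_sub, Prod.snd_sub]

lemma convex_affEQ (ν q : ℝ × ℝ) : Convex ℝ {x | aff ν q x = 0} := by
  have h : {x : ℝ × ℝ | aff ν q x = 0} =
      {x | aff ν q x ≤ 0} ∩ {x | 0 ≤ aff ν q x} := by
    ext x; simp only [Set.mem_setOf_eq, Set.mem_inter_iff]
    constructor
    · intro h; exact ⟨le_of_eq h, ge_of_eq h⟩
    · intro h; linarith [h.1, h.2]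
  rw [h]; exact (convex_affLE ν q).inter (convex_affGE ν q)

lemma collinear_line {ν q : ℝ × ℝ} (hν : ν ≠ 0) :
    Collinear ℝ {x : ℝ × ℝ | aff ν q x = 0} := by
  rw [collinear_iff_exists_forall_eq_smul_vadd]
  refine ⟨q, (ν.1, ν.2), ?_⟩
  intro p hp
  simp only [Set.mem_setOf_eq, aff] at hp
  by_cases h1 : ν.1 = 0
  · have h2 : ν.2 ≠ 0 := by
      intro h2; exact hν (Prod.ext h1 h2)
    refine ⟨(p.2 - q.2) / ν.2, ?_⟩
    apply Prod.ext
    · simp only [Prod.smul_fst, Prod.fst_add, vadd_eq_add, smul_eq_mul]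
      rw [h1] at hp ⊢
      have h3 : ν.2 * (p.1 - q.1) = 0 := by linarith
      have : p.1 - q.1 = 0 := (mul_eq_zero.mp h3).resolve_left h2
      simp; linarith
    · simp only [Prod.smul_snd, Prod.snd_add, vadd_eq_add, smul_eq_mul]
      field_simp
      ring
  · refine ⟨(p.1 - q.1) / ν.1, ?_⟩
    apply Prod.ext
    · simp only [Prod.smul_fst, Prod.fst_add, vadd_eq_add, smul_eq_mul]
      field_simp
      ring
    · simp only [Prod.smul_snd, Prod.snd_add, vadd_eq_add, smul_eq_mul]
      rw [div_mul_eq_mul_div, eq_comm, div_add' _ _ _ h1]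
      rw [div_eq_iff h1]
      linarith [hp]

lemma collinear_line_subset {s : Set (ℝ × ℝ)} (h : Collinear ℝ s) :
    ∃ ν q : ℝ × ℝ, ν ≠ 0 ∧ convexHull ℝ s ⊆ {x | aff ν q x = 0} := by
  rw [collinear_iff_exists_forall_eq_smul_vadd] at h
  obtain ⟨p₀, v, hv⟩ := h
  by_cases h0 : v = 0
  · refine ⟨(1, 0), p₀, by simp, ?_⟩
    apply convexHull_min _ (convex_affEQ _ _)
    intro x hx
    obtain ⟨r, hr⟩ := hv x hx
    rw [h0] at hr
    simp only [smul_zero, vadd_eq_add, zero_add] at hr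
    simp [hr, aff]
  · refine ⟨v, p₀, h0, ?_⟩
    apply convexHull_min _ (convex_affEQ _ _)
    intro x hx
    obtain ⟨r, hr⟩ := hv x hx
    rw [hr]
    simp only [Set.mem_setOf_eq, aff, vadd_eq_add, Prod.fst_add, Prod.snd_add,
      Prod.smul_fst, Prod.smul_snd, smul_eq_mul]
    ring

lemma collinear_of_subset_hull {s t : Set (ℝ × ℝ)} (hsub : s ⊆ convexHull ℝ t)
    (ht : Collinear ℝ t) : Collinear ℝ s := by
  obtain ⟨ν, q, hν, hline⟩ := collinear_line_subset ht
  exact (collinear_line hν).subset (hsub.trans hline)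

lemma interior_empty_of_collinear {s : Set (ℝ × ℝ)} (h : Collinear ℝ s) :
    interior (convexHull ℝ s) = ∅ := by
  obtain ⟨ν, q, hν, hline⟩ := collinear_line_subset h
  apply Set.eq_empty_of_forall_notMem
  intro x hx
  have h1 : aff ν q x < 0 := interior_affLE hν
    (interior_mono (hline.trans (fun y hy => le_of_eq hy)) hx)
  have h2 : 0 < aff ν q x := interior_affGE hν
    (interior_mono (hline.trans (fun y hy => ge_of_eq hy)) hx)
  linarith

lemma cross_ne_of_noncollinear {a b c : ℤ × ℤ}
    (h : ¬ Collinear ℝ ({emb a, emb b, emb c} : Set (ℝ × ℝ))) : detZ a b c ≠ 0 := by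
  intro hdet
  apply h
  have hcR : crossR (emb b - emb a) (emb c - emb a) = 0 := by
    rw [crossR_emb, hdet]; simp
  -- the line through emb a with direction (emb b - emb a) or (emb c - emb a)
  rw [collinear_iff_exists_forall_eq_smul_vadd]
  by_cases hba : emb b - emb a = 0
  · refine ⟨emb a, emb c - emb a, ?_⟩
    rintro p (rfl | rfl | rfl)
    · exact ⟨0, by simp⟩
    · exact ⟨0, by
        have : emb b = emb a := by
          have := sub_eq_zero.mp hba; rw [this]
        simp [this]⟩
    · exact ⟨1, by simp⟩
  · refine ⟨emb a, emb b - emb a, ?_⟩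
    have hb1 : (emb b - emb a).1 ≠ 0 ∨ (emb b - emb a).2 ≠ 0 := by
      by_contra hc
      push_neg at hc
      exact hba (Prod.ext hc.1 hc.2)
    rintro p (rfl | rfl | rfl)
    · exact ⟨0, by simp⟩
    · exact ⟨1, by simp⟩
    · rcases hb1 with h1 | h1
      · refine ⟨(emb c - emb a).1 / (emb b - emb a).1, ?_⟩
        apply Prod.ext
        · simp only [Prod.smul_fst, vadd_eq_add, Prod.fst_add, smul_eq_mul]
          rw [div_mul_cancel₀ _ h1, Prod.fst_sub]; ring
        · simp only [Prod.smul_snd, vadd_eq_add, Prod.snd_add, smul_eq_mul]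
          simp only [crossR] at hcR
          rw [div_mul_eq_mul_div, eq_comm]
          rw [div_add' _ _ _ h1, div_eq_iff h1]
          simp only [Prod.fst_sub, Prod.snd_sub] at hcR ⊢
          linarith [hcR]
      · refine ⟨(emb c - emb a).2 / (emb b - emb a).2, ?_⟩
        apply Prod.ext
        · simp only [Prod.smul_fst, vadd_eq_add, Prod.fst_add, smul_eq_mul]
          simp only [crossR] at hcR
          rw [div_mul_eq_mul_div, eq_comm]
          rw [div_add' _ _ _ h1, div_eq_iff h1]
          simp only [Prod.fst_sub, Prod.snd_sub] at hcR ⊢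
          linarith [hcR]
        · simp only [Prod.smul_snd, vadd_eq_add, Prod.snd_add, smul_eq_mul]
          rw [div_mul_cancel₀ _ h1, Prod.snd_sub]; ring

-- ---------- angular order machinery ----------

def HP (d : ℤ × ℤ) : Prop := 0 < d.1 ∨ (d.1 = 0 ∧ 0 < d.2)

noncomputable def keyQ (d : ℤ × ℤ) : WithTop ℚ :=
  if d.1 = 0 then ⊤ else (((d.2 : ℚ) / (d.1 : ℚ) : ℚ) : WithTop ℚ)

lemma key_lt {d e : ℤ × ℤ} (hd : HP d) (he : HP e) :
    0 < crossZ d e ↔ keyQ d < keyQ e := by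
  unfold keyQ crossZ
  by_cases hd1 : d.1 = 0
  · have hd2 : 0 < d.2 := ((hd.resolve_left (by omega))).2
    by_cases he1 : e.1 = 0
    · rw [if_pos hd1, if_pos he1]
      constructor
      · intro h; rw [hd1, he1] at h; simp at h
      · intro h; exact absurd h (lt_irrefl _)
    · have he1' : 0 < e.1 := he.resolve_right (by omega)
      rw [if_pos hd1, if_neg he1]
      constructor
      · intro h; exfalso; rw [hd1] at h; nlinarith
      · intro h; exact absurd h (not_top_lt)
  · have hd1' : 0 < d.1 := hd.resolve_right (by omega)
    by_cases he1 : e.1 = 0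
    · have he2 : 0 < e.2 := (he.resolve_left (by omega)).2
      rw [if_neg hd1, if_pos he1]
      constructor
      · intro _; exact WithTop.coe_lt_top _
      · intro _; rw [he1]; nlinarith
    · have he1' : 0 < e.1 := he.resolve_right (by omega)
      rw [if_neg hd1, if_neg he1, WithTop.coe_lt_coe]
      have hd1q : (0 : ℚ) < (d.1 : ℚ) := by exact_mod_cast hd1'
      have he1q : (0 : ℚ) < (e.1 : ℚ) := by exact_mod_cast he1'
      rw [div_lt_div_iff₀ hd1q he1q]
      constructor
      · intro h
        have : (0 : ℚ) < (d.1 : ℚ) * (e.2 : ℚ) - (d.2 : ℚ) * (e.1 : ℚ) := by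
          exact_mod_cast h
        linarith
      · intro h
        have : (0 : ℚ) < ((d.1 * e.2 - d.2 * e.1 : ℤ) : ℚ) := by push_cast; linarith
        exact_mod_cast this

lemma between_of_parallel {v p q : ℤ × ℤ} (c : ℚ) (hc1 : 1 ≤ c)
    (heq1 : (((q - v).1 : ℤ) : ℚ) = c * (((p - v).1 : ℤ) : ℚ))
    (heq2 : (((q - v).2 : ℤ) : ℚ) = c * (((p - v).2 : ℤ) : ℚ)) :
    emb p ∈ segment ℝ (emb v) (emb q) := by
  have hc0 : (0 : ℚ) < c := by linarith
  have hcR : (0 : ℝ) < (c : ℝ) := by exact_mod_cast hc0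
  have hb1 : (0:ℝ) ≤ 1 - 1 / (c : ℝ) := by
    have : 1 / (c : ℝ) ≤ 1 := by
      rw [div_le_one hcR]; exact_mod_cast hc1
    linarith
  have hb2 : (0:ℝ) ≤ 1 / (c : ℝ) := by positivity
  have hmem : (1 - 1 / (c : ℝ)) • emb v + (1 / (c : ℝ)) • emb q = emb p := by
    have e1 : ((q.1 : ℚ) : ℝ) - ((v.1 : ℚ) : ℝ) = (c : ℝ) * (((p.1 : ℚ) : ℝ) - ((v.1 : ℚ) : ℝ)) := by
      have := congrArg (fun x : ℚ => (x : ℝ)) heq1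
      push_cast at this ⊢
      simpa using this
    have e2 : ((q.2 : ℚ) : ℝ) - ((v.2 : ℚ) : ℝ) = (c : ℝ) * (((p.2 : ℚ) : ℝ) - ((v.2 : ℚ) : ℝ)) := by
      have := congrArg (fun x : ℚ => (x : ℝ)) heq2
      push_cast at this ⊢
      simpa using this
    push_cast at e1 e2
    apply Prod.ext
    · simp only [emb, Prod.fst_add, Prod.smul_fst, smul_eq_mul]
      field_simp
      nlinarith [e1]
    · simp only [emb, Prod.snd_add, Prod.smul_snd, smul_eq_mul]
      field_simp
      nlinarith [e2]
  exact ⟨1 - 1 / (c : ℝ), 1 / (c : ℝ), hb1, hb2, by ring, hmem⟩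

lemma collinear_triple_contra {V : Finset (ℤ × ℤ)}
    (hext : ∀ r ∈ V, emb r ∉ convexHull ℝ (emb '' ((V.erase r) : Set (ℤ × ℤ))))
    {p q r : ℤ × ℤ} (hp : p ∈ V) (hq : q ∈ V) (hr : r ∈ V)
    (hpq : p ≠ q) (hpr : p ≠ r) (hqr : q ≠ r)
    (hcol : Collinear ℝ ({emb p, emb q, emb r} : Set (ℝ × ℝ))) : False := by
  have key : ∀ x y z : ℤ × ℤ, x ∈ V → y ∈ V → z ∈ V → y ≠ x → z ≠ x →
      emb x ∈ segment ℝ (emb y) (emb z) → False := by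
    intro x y z hx hy hz hyx hzx hseg
    apply hext x hx
    have hsub : ({emb y, emb z} : Set (ℝ × ℝ)) ⊆ emb '' ((V.erase x) : Set (ℤ × ℤ)) := by
      rintro w (rfl | rfl)
      · exact ⟨y, by simp [Finset.mem_erase, hyx, hy], rfl⟩
      · exact ⟨z, by simp [Finset.mem_erase, hzx, hz], rfl⟩
    have hmono : convexHull ℝ ({emb y, emb z} : Set (ℝ × ℝ)) ⊆
        convexHull ℝ (emb '' ((V.erase x) : Set (ℤ × ℤ))) := convexHull_mono hsub
    rw [convexHull_pair] at hmono
    exact hmono hseg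
  rcases hcol.wbtw_or_wbtw_or_wbtw with h | h | h
  · exact key q p r hq hp hr hpq (Ne.symm hqr) h.mem_segment
  · exact key r q p hr hq hp hqr hpr h.mem_segment
  · exact key p r q hp hr hq (Ne.symm hpr) (Ne.symm hpq) h.mem_segment

lemma crossR_skew (u w : ℝ × ℝ) : crossR u w = - crossR w u := by
  simp [crossR]; ring

lemma crossZ_self (d : ℤ × ℤ) : crossZ d d = 0 := by simp [crossZ]; ring

lemma aff_combo (ν q x y : ℝ × ℝ) (a b : ℝ) (hab : a + b = 1) :
    aff ν q (a • x + b • y) = a * aff ν q x + b * aff ν q y := by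
  have hb : b = 1 - a := by linarith
  subst hb
  simp only [aff, Prod.fst_add, Prod.snd_add, Prod.smul_fst, Prod.smul_snd, smul_eq_mul]
  ring

lemma cone_decomp {A B u : ℝ × ℝ} (h : crossR A B ≠ 0) :
    u = (crossR u B / crossR A B) • A + (crossR A u / crossR A B) • B := by
  apply Prod.ext <;>
  · simp only [crossR, Prod.fst_add, Prod.snd_add, Prod.smul_fst, Prod.smul_snd,
      smul_eq_mul]
    simp only [crossR] at h
    rw [div_mul_eq_mul_div, div_mul_eq_mul_div, ← add_div, eq_div_iff h]
    ring

set_option maxHeartbeats 2000000 in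
lemma lemC : ∀ (n : ℕ) (V : Finset (ℤ × ℤ)), V.card ≤ n →
    ¬ Collinear ℝ (emb '' (V : Set (ℤ × ℤ))) →
    ∃ L, good (convexHull ℝ (emb '' (V : Set (ℤ × ℤ)))) L := by
  intro n
  induction n with
  | zero =>
    intro V hcard hnc
    exfalso
    apply hnc
    rw [Finset.card_eq_zero.mp (Nat.le_zero.mp hcard)]
    simp
    exact collinear_empty ℝ _
  | succ n ih =>
    intro V hcard hnc
    by_cases hred : ∃ v ∈ V, emb v ∈ convexHull ℝ (emb '' ((V.erase v) : Set (ℤ × ℤ)))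
    · obtain ⟨v, hv, hvin⟩ := hred
      have hullEq : convexHull ℝ (emb '' (V : Set (ℤ × ℤ)))
          = convexHull ℝ (emb '' ((V.erase v) : Set (ℤ × ℤ))) := by
        apply subset_antisymm
        · apply convexHull_min _ (convex_convexHull _ _)
          rintro x ⟨p, hp, rfl⟩
          by_cases hpv : p = v
          · subst hpv; exact hvin
          · refine subset_convexHull _ _ ⟨p, ?_, rfl⟩
            simp only [Finset.coe_erase, Set.mem_diff, Set.mem_singleton_iff]
            exact ⟨hp, hpv⟩
        · exact convexHull_mono (Set.image_mono (by
            intro p hp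
            exact (Finset.erase_subset v V) hp))
      have hnc' : ¬ Collinear ℝ (emb '' ((V.erase v) : Set (ℤ × ℤ))) := by
        intro hcol
        apply hnc
        apply collinear_of_subset_hull _ hcol
        exact (subset_convexHull ℝ _).trans (le_of_eq hullEq)
      have hcard' : (V.erase v).card ≤ n := by
        have := Finset.card_erase_of_mem hv
        have := Finset.card_pos.mpr ⟨v, hv⟩
        omega
      obtain ⟨L, hL⟩ := ih (V.erase v) hcard' hnc'
      exact ⟨L, by rw [hullEq]; exact hL⟩
    · push_neg at hred
      have hext := hred
      have hcard3 : 3 ≤ V.card := by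
        by_contra h
        push_neg at h
        apply hnc
        have h2 : V.card = 0 ∨ V.card = 1 ∨ V.card = 2 := by omega
        rcases h2 with h2 | h2 | h2
        · rw [Finset.card_eq_zero.mp h2]; simp; exact collinear_empty ℝ _
        · obtain ⟨x, hx⟩ := Finset.card_eq_one.mp h2
          rw [hx]; simp
          exact collinear_singleton ℝ _
        · obtain ⟨x, y, hxy, hxyeq⟩ := Finset.card_eq_two.mp h2
          rw [hxyeq]
          simp only [Finset.coe_insert, Finset.coe_singleton, Set.image_insert_eq,
            Set.image_singleton]
          exact collinear_pair ℝ _ _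
      by_cases hc3 : V.card = 3
      · obtain ⟨a, b, c, hab, hac, hbc, hVeq⟩ := Finset.card_eq_three.mp hc3
        have himg : emb '' (V : Set (ℤ × ℤ)) = {emb a, emb b, emb c} := by
          rw [hVeq]
          simp only [Finset.coe_insert, Finset.coe_singleton, Set.image_insert_eq,
            Set.image_singleton]
        rw [himg] at hnc ⊢
        have hdet := cross_ne_of_noncollinear hnc
        exact lemB (detZ a b c).natAbs a b c hdet le_rfl
      · have hcard4 : 4 ≤ V.card := by omega
        obtain ⟨v, hv, hvmin⟩ := V.exists_min_image (fun p => toLex p)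
          (Finset.card_pos.mp (by omega))
        have hcarde : 3 ≤ (V.erase v).card := by
          have := Finset.card_erase_of_mem hv; omega
        -- halfplane property of directions
        have hHP : ∀ p ∈ V.erase v, HP (p - v) := by
          intro p hp
          have hpv : p ≠ v := (Finset.mem_erase.mp hp).1
          have hple := hvmin p (Finset.mem_erase.mp hp).2
          have hlt : toLex v < toLex p :=
            lt_of_le_of_ne hple (fun h => hpv (toLex.injective h).symm)
          rw [Prod.Lex.lt_iff] at hlt
          simp only [ofLex_toLex] at hlt
          unfold HP
          simp only [Prod.fst_sub, Prod.snd_sub]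
          rcases hlt with h | ⟨h1, h2⟩
          · left; omega
          · right; omega
        -- segment contradiction helper
        have seg_contra : ∀ x y : ℤ × ℤ, x ∈ V.erase v → y ∈ V.erase v → x ≠ y →
            emb x ∈ segment ℝ (emb v) (emb y) → False := by
          intro x y hx hy hxy hseg
          apply hext x (Finset.mem_erase.mp hx).2
          have hsub : ({emb v, emb y} : Set (ℝ × ℝ)) ⊆
              emb '' ((V.erase x) : Set (ℤ × ℤ)) := by
            rintro w (rfl | rfl)
            · refine ⟨v, ?_, rfl⟩
              simp only [Finset.coe_erase, Set.mem_diff, Set.mem_singleton_iff]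
              exact ⟨hv, Ne.symm (Finset.mem_erase.mp hx).1⟩
            · refine ⟨y, ?_, rfl⟩
              simp only [Finset.coe_erase, Set.mem_diff, Set.mem_singleton_iff]
              exact ⟨(Finset.mem_erase.mp hy).2, Ne.symm hxy⟩
          have hmono : convexHull ℝ ({emb v, emb y} : Set (ℝ × ℝ)) ⊆
              convexHull ℝ (emb '' ((V.erase x) : Set (ℤ × ℤ))) := convexHull_mono hsub
          rw [convexHull_pair] at hmono
          exact hmono hseg
        -- no two directions collinear
        have hnocol : ∀ p ∈ V.erase v, ∀ q ∈ V.erase v, p ≠ q →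
            crossZ (p - v) (q - v) ≠ 0 := by
          intro p hp q hq hpq h0
          have hdp := hHP p hp
          have hdq := hHP q hq
          obtain ⟨c, hc0, he1, he2⟩ : ∃ c : ℚ, 0 < c ∧
              (((q - v).1 : ℤ) : ℚ) = c * (((p - v).1 : ℤ) : ℚ) ∧
              (((q - v).2 : ℤ) : ℚ) = c * (((p - v).2 : ℤ) : ℚ) := by
            unfold crossZ at h0
            by_cases hd1 : (p - v).1 = 0
            · have hd2 : 0 < (p - v).2 := (hdp.resolve_left (by omega)).2
              have he1' : (q - v).1 = 0 := by
                rw [hd1] at h0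
                simp only [zero_mul, zero_sub, neg_eq_zero] at h0
                rcases mul_eq_zero.mp h0 with h | h
                · omega
                · exact h
              have he2' : 0 < (q - v).2 := (hdq.resolve_left (by omega)).2
              refine ⟨((q - v).2 : ℚ) / ((p - v).2 : ℚ), ?_, ?_, ?_⟩
              · apply div_pos <;> exact_mod_cast (by assumption)
              · rw [hd1, he1']; simp
              · rw [div_mul_cancel₀]
                exact_mod_cast (by omega : ¬ ((p - v).2 : ℤ) = 0)
            · have hd1' : 0 < (p - v).1 := hdp.resolve_right (by omega)
              have hq1 : 0 < (q - v).1 := by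
                rcases hdq with h | ⟨h1, h2⟩
                · exact h
                · exfalso
                  rw [h1] at h0
                  simp only [mul_zero, sub_zero] at h0
                  rcases mul_eq_zero.mp h0 with h | h <;> omega
              refine ⟨((q - v).1 : ℚ) / ((p - v).1 : ℚ), ?_, ?_, ?_⟩
              · apply div_pos <;> exact_mod_cast (by assumption)
              · rw [div_mul_cancel₀]
                exact_mod_cast (by omega : ¬ ((p - v).1 : ℤ) = 0)
              · rw [div_mul_eq_mul_div, eq_div_iff
                  (by exact_mod_cast (by omega : ¬ ((p - v).1 : ℤ) = 0))]
                have h5 : (q - v).2 * (p - v).1 = (q - v).1 * (p - v).2 := by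
                  rw [mul_comm]; linarith
                exact_mod_cast h5
          rcases le_or_gt 1 c with hc | hc
          · exact seg_contra p q hp hq hpq (between_of_parallel c hc he1 he2)
          · have hcne : c ≠ 0 := ne_of_gt hc0
            have hc1' : 1 ≤ 1 / c := by
              rw [le_div_iff₀ hc0]; linarith
            have hf1 : (((p - v).1 : ℤ) : ℚ) = (1 / c) * (((q - v).1 : ℤ) : ℚ) := by
              rw [he1]; field_simp
            have hf2 : (((p - v).2 : ℤ) : ℚ) = (1 / c) * (((q - v).2 : ℤ) : ℚ) := by
              rw [he2]; field_simp
            exact seg_contra q p hq hp (Ne.symm hpq) (between_of_parallel (1 / c) hc1' hf1 hf2)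
        -- extremal directions a (min) and b (max)
        have hne : (V.erase v).Nonempty := Finset.card_pos.mp (by omega)
        obtain ⟨a, ha, hamin⟩ := (V.erase v).exists_min_image (fun p => keyQ (p - v)) hne
        obtain ⟨b, hb, hbmax⟩ := (V.erase v).exists_max_image (fun p => keyQ (p - v)) hne
        have hkey_eq_contra : ∀ p ∈ V.erase v, ∀ q ∈ V.erase v, p ≠ q →
            keyQ (p - v) = keyQ (q - v) → False := by
          intro p hp q hq hpq hkey
          have h1 : ¬ (0 < crossZ (p - v) (q - v)) := by
            rw [key_lt (hHP p hp) (hHP q hq), hkey]; exact lt_irrefl _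
          have h2 : ¬ (0 < crossZ (q - v) (p - v)) := by
            rw [key_lt (hHP q hq) (hHP p hp), hkey]; exact lt_irrefl _
          rw [crossZ_skew] at h2
          exact hnocol p hp q hq hpq (by omega)
        have hab : a ≠ b := by
          intro hab
          obtain ⟨x, hx, y, hy, hxy⟩ := Finset.one_lt_card.mp (by omega : 1 < (V.erase v).card)
          have hor : x ≠ a ∨ y ≠ a := by
            by_contra hcc; push_neg at hcc; rw [hcc.1, hcc.2] at hxy; exact hxy rfl
          obtain ⟨p, hp, hpa⟩ : ∃ p ∈ V.erase v, p ≠ a := by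
            rcases hor with h | h
            · exact ⟨x, hx, h⟩
            · exact ⟨y, hy, h⟩
          have h1 := hamin p hp
          have h2 := hbmax p hp
          rw [← hab] at h2
          exact hkey_eq_contra a ha p hp (Ne.symm hpa) (le_antisymm h1 h2)
        have hstar_a : ∀ p ∈ V.erase v, p ≠ a → 0 < crossZ (a - v) (p - v) := by
          intro p hp hpa
          have h1 : ¬ (0 < crossZ (p - v) (a - v)) := by
            rw [key_lt (hHP p hp) (hHP a ha)]
            exact not_lt.mpr (hamin p hp)
          have h2 : crossZ (a - v) (p - v) ≠ 0 := hnocol a ha p hp (Ne.symm hpa)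
          rw [crossZ_skew] at h1
          omega
        have hstar_b : ∀ p ∈ V.erase v, p ≠ b → 0 < crossZ (p - v) (b - v) := by
          intro p hp hpb
          have h1 : ¬ (0 < crossZ (b - v) (p - v)) := by
            rw [key_lt (hHP b hb) (hHP p hp)]
            exact not_lt.mpr (hbmax p hp)
          have h2 : crossZ (p - v) (b - v) ≠ 0 := hnocol p hp b hb hpb
          rw [crossZ_skew] at h1
          omega
        have hcab : 0 < crossZ (a - v) (b - v) := hstar_a b hb (Ne.symm hab)
        -- real setup
        set Pv : ℝ × ℝ := emb v with hPvd
        set Pa : ℝ × ℝ := emb a with hPad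
        set Pb : ℝ × ℝ := emb b with hPbd
        set A : ℝ × ℝ := Pa - Pv with hAd
        set B : ℝ × ℝ := Pb - Pv with hBd
        set cR : ℝ := crossR A B with hcRd
        have hcR_cast : cR = ((crossZ (a - v) (b - v) : ℤ) : ℝ) := by
          rw [hcRd, hAd, hBd, hPvd, hPad, hPbd, crossR_emb, detZ_sub]
        have hcRpos : 0 < cR := by rw [hcR_cast]; exact_mod_cast hcab
        have hcast_gen : ∀ p : ℤ × ℤ, crossR (emb p - Pv) B
            = ((crossZ (p - v) (b - v) : ℤ) : ℝ) := by
          intro p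
          rw [hBd, hPvd, hPbd, crossR_emb, detZ_sub]
        have hcast_genA : ∀ p : ℤ × ℤ, crossR A (emb p - Pv)
            = ((crossZ (a - v) (p - v) : ℤ) : ℝ) := by
          intro p
          have h1 : crossR A (emb p - Pv) = - crossR (emb p - Pv) A := crossR_skew _ _
          rw [h1, hAd, hPvd, hPad, crossR_emb, detZ_sub]
          simp only [crossZ, Prod.fst_sub, Prod.snd_sub]
          push_cast; ring
        -- aff reformulations
        have haffA : ∀ x : ℝ × ℝ, aff A Pv x = crossR A (x - Pv) := fun x => aff_eq_crossR _ _ _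
        have haffB : ∀ x : ℝ × ℝ, aff (-B) Pv x = crossR (x - Pv) B := by
          intro x
          rw [aff_eq_crossR, crossR_skew]
          simp [crossR]
          ring
        -- cone inclusions
        have hconeA : convexHull ℝ (emb '' (V : Set (ℤ × ℤ))) ⊆ {x | 0 ≤ aff A Pv x} := by
          apply convexHull_min _ (convex_affGE _ _)
          rintro x ⟨p, hp, rfl⟩
          show (0 : ℝ) ≤ aff A Pv (emb p)
          rw [haffA, hcast_genA]
          by_cases hpv : p = v
          · subst hpv
            rw [sub_self]
            simp [crossZ]
          · by_cases hpa : p = a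
            · subst hpa
              rw [crossZ_self]
              simp
            · have := hstar_a p (Finset.mem_erase.mpr ⟨hpv, hp⟩) hpa
              exact_mod_cast le_of_lt this
        have hconeB : convexHull ℝ (emb '' (V : Set (ℤ × ℤ))) ⊆ {x | 0 ≤ aff (-B) Pv x} := by
          apply convexHull_min _ (convex_affGE _ _)
          rintro x ⟨p, hp, rfl⟩
          show (0 : ℝ) ≤ aff (-B) Pv (emb p)
          rw [haffB, hcast_gen]
          by_cases hpv : p = v
          · subst hpv
            rw [sub_self]
            simp [crossZ]
          · by_cases hpb : p = b
            · subst hpb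
              rw [crossZ_self]
              simp
            · have := hstar_b p (Finset.mem_erase.mpr ⟨hpv, hp⟩) hpb
              exact_mod_cast le_of_lt this
        -- the cutting line f = aff (B - A) Pa
        have hfv : aff (B - A) Pa Pv = cR := by
          rw [hcRd, hAd, hBd]
          simp only [aff, crossR, Prod.fst_sub, Prod.snd_sub]
          ring
        have hfa : aff (B - A) Pa Pa = 0 := aff_self _ _
        have hBA : B - A = Pb - Pa := by rw [hAd, hBd]; abel
        have hfb : aff (B - A) Pa Pb = 0 := by rw [hBA]; exact aff_base _ _
        have hfx_of : ∀ (x : ℝ × ℝ) (α β : ℝ), x = Pv + α • A + β • B →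
            aff (B - A) Pa x = cR * (1 - α - β) := by
          intro x α β hx
          rw [hx, hcRd, hAd, hBd]
          simp only [aff, crossR, Prod.fst_sub, Prod.snd_sub, Prod.fst_add, Prod.snd_add,
            Prod.smul_fst, Prod.smul_snd, smul_eq_mul]
          ring
        have hcRne : crossR A B ≠ 0 := by rw [← hcRd]; exact hcRpos.ne'
        have hrep : ∀ x : ℝ × ℝ, 0 ≤ aff A Pv x → 0 ≤ aff (-B) Pv x →
            ∃ α β : ℝ, 0 ≤ α ∧ 0 ≤ β ∧ x = Pv + α • A + β • B := by
          intro x h1 h2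
          rw [haffA x] at h1
          rw [haffB x] at h2
          refine ⟨crossR (x - Pv) B / crossR A B, crossR A (x - Pv) / crossR A B,
            div_nonneg h2 (by rw [← hcRd]; exact hcRpos.le),
            div_nonneg h1 (by rw [← hcRd]; exact hcRpos.le), ?_⟩
          have hu := cone_decomp (u := x - Pv) hcRne
          rw [add_assoc, ← hu]
          abel
        have htri : ∀ x, x ∈ convexHull ℝ (emb '' (V : Set (ℤ × ℤ))) →
            0 ≤ aff (B - A) Pa x → x ∈ convexHull ℝ {Pv, Pa, Pb} := by
          intro x hx hfx
          obtain ⟨α, β, hα, hβ, hxrep⟩ := hrep x (hconeA hx) (hconeB hx)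
          have hfx2 := hfx_of x α β hxrep
          have hαβ : 0 ≤ 1 - α - β := by
            by_contra hcon
            push_neg at hcon
            nlinarith
          have hcombo : x = (1 - α - β) • Pv + α • Pa + β • Pb := by
            rw [hxrep, hAd, hBd]; module
          rw [hcombo]
          exact mem_hull3 hαβ hα hβ (by ring)
        have haV : a ∈ V := (Finset.mem_erase.mp ha).2
        have hbV : b ∈ V := (Finset.mem_erase.mp hb).2
        have hfle : ∀ p ∈ V.erase v, aff (B - A) Pa (emb p) ≤ 0 := by
          intro p hp
          by_contra h'
          push_neg at h'
          have hpmem : emb p ∈ convexHull ℝ (emb '' (V : Set (ℤ × ℤ))) :=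
            subset_convexHull _ _ ⟨p, (Finset.mem_erase.mp hp).2, rfl⟩
          have htri' := htri (emb p) hpmem (le_of_lt h')
          by_cases hpa : p = a
          · subst hpa
            rw [← hPad, hfa] at h'
            exact lt_irrefl _ h'
          · by_cases hpb : p = b
            · subst hpb
              rw [← hPbd, hfb] at h'
              exact lt_irrefl _ h'
            · apply hext p (Finset.mem_erase.mp hp).2
              have hpv : p ≠ v := (Finset.mem_erase.mp hp).1
              have hsub : ({Pv, Pa, Pb} : Set (ℝ × ℝ)) ⊆
                  emb '' ((V.erase p) : Set (ℤ × ℤ)) := by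
                rintro w (rfl | rfl | hw)
                · refine ⟨v, ?_, hPvd.symm⟩
                  simp only [Finset.coe_erase, Set.mem_diff, Set.mem_singleton_iff]
                  exact ⟨hv, Ne.symm hpv⟩
                · refine ⟨a, ?_, hPad.symm⟩
                  simp only [Finset.coe_erase, Set.mem_diff, Set.mem_singleton_iff]
                  exact ⟨haV, Ne.symm hpa⟩
                · rw [Set.mem_singleton_iff] at hw
                  subst hw
                  refine ⟨b, ?_, hPbd.symm⟩
                  simp only [Finset.coe_erase, Set.mem_diff, Set.mem_singleton_iff]
                  exact ⟨hbV, Ne.symm hpb⟩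
              exact (convexHull_mono hsub) htri'
        have hS1 : convexHull ℝ (emb '' ((V.erase v) : Set (ℤ × ℤ))) ⊆
            {x | aff (B - A) Pa x ≤ 0} := by
          apply convexHull_min _ (convex_affLE _ _)
          rintro x ⟨p, hp, rfl⟩
          exact hfle p hp
        have hS2 : convexHull ℝ ({Pv, Pa, Pb} : Set (ℝ × ℝ)) ⊆
            {x | 0 ≤ aff (B - A) Pa x} :=
          hull3_subset (convex_affGE _ _)
            (by simp only [Set.mem_setOf_eq]; rw [hfv]; exact hcRpos.le)
            (by simp only [Set.mem_setOf_eq]; rw [hfa])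
            (by simp only [Set.mem_setOf_eq]; rw [hfb])
        have hPvV : Pv ∈ convexHull ℝ (emb '' (V : Set (ℤ × ℤ))) :=
          subset_convexHull _ _ ⟨v, hv, hPvd.symm⟩
        have hPaV : Pa ∈ convexHull ℝ (emb '' (V : Set (ℤ × ℤ))) :=
          subset_convexHull _ _ ⟨a, haV, hPad.symm⟩
        have hPbV : Pb ∈ convexHull ℝ (emb '' (V : Set (ℤ × ℤ))) :=
          subset_convexHull _ _ ⟨b, hbV, hPbd.symm⟩
        have hEsub : convexHull ℝ (emb '' ((V.erase v) : Set (ℤ × ℤ))) ⊆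
            convexHull ℝ (emb '' (V : Set (ℤ × ℤ))) :=
          convexHull_mono (Set.image_mono (fun p hp => (Finset.erase_subset v V) hp))
        have himg : emb '' (V : Set (ℤ × ℤ))
            = insert Pv (emb '' ((V.erase v) : Set (ℤ × ℤ))) := by
          apply subset_antisymm
          · rintro x ⟨p, hp, rfl⟩
            by_cases hpv : p = v
            · subst hpv; rw [← hPvd]; exact Set.mem_insert _ _
            · apply Set.mem_insert_of_mem
              refine ⟨p, ?_, rfl⟩
              simp only [Finset.coe_erase, Set.mem_diff, Set.mem_singleton_iff]
              exact ⟨hp, hpv⟩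
          · rintro x (rfl | ⟨p, hp, rfl⟩)
            · exact ⟨v, hv, hPvd.symm⟩
            · refine ⟨p, ?_, rfl⟩
              simp only [Finset.coe_erase, Set.mem_diff, Set.mem_singleton_iff] at hp
              exact hp.1
        have herne : (emb '' ((V.erase v) : Set (ℤ × ℤ))).Nonempty :=
          ⟨emb a, ⟨a, ha, rfl⟩⟩
        -- decomposition: f ≤ 0 part lands in hull(erase)
        have hdecomp_le : ∀ x, x ∈ convexHull ℝ (emb '' (V : Set (ℤ × ℤ))) →
            aff (B - A) Pa x ≤ 0 →
            x ∈ convexHull ℝ (emb '' ((V.erase v) : Set (ℤ × ℤ))) := by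
          intro x hx hfx
          rw [himg] at hx
          rcases (mem_hull_insert_iff herne Pv x).mp hx with ⟨t, ht0, ht1, y, hy, hxe⟩
          have hfy : aff (B - A) Pa y ≤ 0 := hS1 hy
          have haffc : aff (B - A) Pa x = t * cR + (1 - t) * aff (B - A) Pa y := by
            rw [hxe, aff_combo _ _ _ _ _ _ (by ring : t + (1 - t) = 1), hfv]
          by_cases hfy0 : aff (B - A) Pa y = 0
          · have ht' : t = 0 := by
              rw [hfy0] at haffc
              by_contra htne
              have ht0' : 0 < t := lt_of_le_of_ne ht0 (Ne.symm htne)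
              nlinarith
            rw [ht'] at hxe
            simp only [zero_smul, zero_add, sub_zero, one_smul] at hxe
            rwa [hxe]
          · have hfy' : aff (B - A) Pa y < 0 := lt_of_le_of_ne hfy hfy0
            set fy : ℝ := aff (B - A) Pa y with hfyd
            have hden : fy - cR < 0 := by rw [hfyd]; linarith
            set u : ℝ := fy / (fy - cR) with hud
            have hu0 : 0 < u := by
              rw [hud]
              exact div_pos_of_neg_of_neg (by rw [hfyd]; exact hfy') hden
            have hu1 : u < 1 := by
              rw [hud, div_lt_one_of_neg hden]
              linarith
            have hdne : fy - cR ≠ 0 := ne_of_lt hden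
            have hukey : u * cR + (1 - u) * fy = 0 := by
              rw [hud]
              field_simp
              ring
            set w : ℝ × ℝ := u • Pv + (1 - u) • y with hwd
            have hyV : y ∈ convexHull ℝ (emb '' (V : Set (ℤ × ℤ))) := hEsub hy
            have hwV : w ∈ convexHull ℝ (emb '' (V : Set (ℤ × ℤ))) := by
              rw [hwd]
              exact (convex_convexHull ℝ _) hPvV hyV hu0.le (by linarith) (by ring)
            have hfw : aff (B - A) Pa w = 0 := by
              rw [hwd, aff_combo _ _ _ _ _ _ (by ring : u + (1 - u) = 1), hfv, ← hfyd]
              exact hukey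
            obtain ⟨α, β, hα, hβ, hwrep⟩ := hrep w (hconeA hwV) (hconeB hwV)
            have hfw2 := hfx_of w α β hwrep
            have hαβ : 1 - α - β = 0 := by
              rw [hfw] at hfw2
              rcases mul_eq_zero.mp hfw2.symm with h | h
              · exact absurd h hcRpos.ne'
              · exact h
            have hwseg : w = α • Pa + (1 - α) • Pb := by
              have hβ' : β = 1 - α := by linarith
              rw [hwrep, hβ', hAd, hBd]
              match_scalars <;> linarith
            have hwhull : w ∈ convexHull ℝ (emb '' ((V.erase v) : Set (ℤ × ℤ))) := by
              have hsub2 : ({Pa, Pb} : Set (ℝ × ℝ)) ⊆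
                  emb '' ((V.erase v) : Set (ℤ × ℤ)) := by
                rintro z (rfl | hz)
                · exact ⟨a, ha, hPad.symm⟩
                · rw [Set.mem_singleton_iff] at hz
                  subst hz
                  exact ⟨b, hb, hPbd.symm⟩
              have hmono2 : convexHull ℝ ({Pa, Pb} : Set (ℝ × ℝ)) ⊆
                  convexHull ℝ (emb '' ((V.erase v) : Set (ℤ × ℤ))) := convexHull_mono hsub2
              rw [convexHull_pair] at hmono2
              apply hmono2
              exact ⟨α, 1 - α, hα, by linarith, by ring, hwseg.symm⟩
            -- x is between w and y
            have hfx' : t * cR + (1 - t) * fy ≤ 0 := by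
              linarith [hfx, haffc]
            have htu : t ≤ u := by
              by_contra hcon
              push_neg at hcon
              nlinarith
            have hxwy : x = (t / u) • w + (1 - t / u) • y := by
              rw [hxe, hwd]
              match_scalars
              · field_simp
              · field_simp
                ring
            rw [hxwy]
            exact (convex_convexHull ℝ _) hwhull hy (div_nonneg ht0 hu0.le)
              (by
                have : t / u ≤ 1 := by
                  rw [div_le_one hu0]; exact htu
                linarith)
              (by ring)
        -- assemble
        have hdab : detZ v a b ≠ 0 := by
          rw [detZ_sub]; exact ne_of_gt hcab
        obtain ⟨L2, hL2⟩ := lemB (detZ v a b).natAbs v a b hdab le_rfl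
        have hnc' : ¬ Collinear ℝ (emb '' ((V.erase v) : Set (ℤ × ℤ))) := by
          intro hcol
          obtain ⟨x, hx, y, hy, hxy⟩ :=
            Finset.one_lt_card.mp (by omega : 1 < (V.erase v).card)
          have h2 : 0 < ((V.erase v).erase x |>.erase y).card := by
            have e1 := Finset.card_erase_of_mem hx
            have hyx : y ∈ (V.erase v).erase x := Finset.mem_erase.mpr ⟨Ne.symm hxy, hy⟩
            have e2 := Finset.card_erase_of_mem hyx
            omega
          obtain ⟨z, hz⟩ := Finset.card_pos.mp h2
          have hzy : z ≠ y := (Finset.mem_erase.mp hz).1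
          have hzx : z ≠ x := (Finset.mem_erase.mp (Finset.mem_erase.mp hz).2).1
          have hzmem : z ∈ V.erase v := (Finset.mem_erase.mp (Finset.mem_erase.mp hz).2).2
          apply collinear_triple_contra hext (Finset.mem_erase.mp hx).2
            (Finset.mem_erase.mp hy).2 (Finset.mem_erase.mp hzmem).2 hxy (Ne.symm hzx)
            (Ne.symm hzy)
          apply hcol.subset
          rintro w (rfl | rfl | hw)
          · exact ⟨x, hx, rfl⟩
          · exact ⟨y, hy, rfl⟩
          · rw [Set.mem_singleton_iff] at hw
            subst hw
            exact ⟨z, hzmem, rfl⟩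
        have hcard' : (V.erase v).card ≤ n := by
          have := Finset.card_erase_of_mem hv; omega
        obtain ⟨L1, hL1⟩ := ih (V.erase v) hcard' hnc'
        have hL2' : good (convexHull ℝ ({Pv, Pa, Pb} : Set (ℝ × ℝ))) L2 := by
          rw [hPvd, hPad, hPbd]; exact hL2
        have hνne : B - A ≠ 0 := by
          rw [hBA]
          exact sub_ne_zero.mpr (fun h => hab (emb_inj (hPad ▸ hPbd ▸ h)).symm)
        have hgood := good_append hL1 hL2' (by
          intro t ht s hs
          exact disj_of_sep hνne
            ((good_hull_subset hL1 ht).trans hS1)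
            ((good_hull_subset hL2' hs).trans hS2))
        have hunion : convexHull ℝ (emb '' ((V.erase v) : Set (ℤ × ℤ)))
            ∪ convexHull ℝ ({Pv, Pa, Pb} : Set (ℝ × ℝ))
            = convexHull ℝ (emb '' (V : Set (ℤ × ℤ))) := by
          apply subset_antisymm
          · apply Set.union_subset hEsub
            exact hull3_subset (convex_convexHull _ _) hPvV hPaV hPbV
          · intro x hx
            rcases le_total (aff (B - A) Pa x) 0 with h | h
            · exact Or.inl (hdecomp_le x hx h)
            · exact Or.inr (htri x hx h)
        exact ⟨L1 ++ L2, hunion ▸ hgood⟩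

lemma emb_combo {z v0 v1 v2 : ℤ × ℤ} {l0 l1 l2 : ℚ}
    (hc1 : (z.1 : ℚ) = l0 * v0.1 + l1 * v1.1 + l2 * v2.1)
    (hc2 : (z.2 : ℚ) = l0 * v0.2 + l1 * v1.2 + l2 * v2.2) :
    emb z = (l0 : ℝ) • emb v0 + (l1 : ℝ) • emb v1 + (l2 : ℝ) • emb v2 := by
  have e1 : ((z.1 : ℚ) : ℝ) = ((l0 * v0.1 + l1 * v1.1 + l2 * v2.1 : ℚ) : ℝ) := by
    exact_mod_cast congrArg (fun q : ℚ => (q : ℝ)) hc1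
  have e2 : ((z.2 : ℚ) : ℝ) = ((l0 * v0.2 + l1 * v1.2 + l2 * v2.2 : ℚ) : ℝ) := by
    exact_mod_cast congrArg (fun q : ℚ => (q : ℝ)) hc2
  push_cast at e1 e2
  apply Prod.ext
  · simpa [emb, Prod.fst_add, Prod.smul_fst, smul_eq_mul] using e1
  · simpa [emb, Prod.snd_add, Prod.smul_snd, smul_eq_mul] using e2

end
end S10

/- STATEMENT 10: Every (2-dimensional) lattice polygon P ⊂ ℝ² admits a triangulation
   into basic lattice triangles (vertices v₀,v₁,v₂ with v₁−v₀, v₂−v₀ a ℤ-basis of ℤ²,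
   i.e. determinant ±1); equivalently, every maximal lattice triangulation (each
   triangle contains no lattice points besides its vertices) is basic. -/
theorem stmt10 (V : Finset (ℤ × ℤ)) (P : Set (ℝ × ℝ))
    (hP : P = convexHull ℝ ((fun p : ℤ × ℤ => ((p.1 : ℝ), (p.2 : ℝ))) '' (V : Set (ℤ × ℤ))))
    (hdim : (interior P).Nonempty) :
    -- existence of a basic lattice triangulation of P:
    (∃ (m : ℕ) (t : Fin m → Fin 3 → ℤ × ℤ),
      (∀ i : Fin m,
        ((t i 1).1 - (t i 0).1) * ((t i 2).2 - (t i 0).2)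
          - ((t i 1).2 - (t i 0).2) * ((t i 2).1 - (t i 0).1) = 1 ∨
        ((t i 1).1 - (t i 0).1) * ((t i 2).2 - (t i 0).2)
          - ((t i 1).2 - (t i 0).2) * ((t i 2).1 - (t i 0).1) = -1) ∧
      (⋃ i : Fin m,
        convexHull ℝ ((fun p : ℤ × ℤ => ((p.1 : ℝ), (p.2 : ℝ))) '' Set.range (t i))) = P ∧
      (∀ i j : Fin m, i ≠ j →
        interior (convexHull ℝ ((fun p : ℤ × ℤ => ((p.1 : ℝ), (p.2 : ℝ))) '' Set.range (t i)))
        ∩ interior (convexHull ℝ ((fun p : ℤ × ℤ => ((p.1 : ℝ), (p.2 : ℝ))) '' Set.range (t j)))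
        = ∅)) ∧
    -- every maximal lattice triangle in dimension 2 is basic:
    (∀ v0 v1 v2 : ℤ × ℤ,
      (v1.1 - v0.1) * (v2.2 - v0.2) - (v1.2 - v0.2) * (v2.1 - v0.1) ≠ 0 →
      {z : ℤ × ℤ | ((z.1 : ℝ), (z.2 : ℝ)) ∈
        convexHull ℝ {((v0.1 : ℝ), (v0.2 : ℝ)), ((v1.1 : ℝ), (v1.2 : ℝ)),
          ((v2.1 : ℝ), (v2.2 : ℝ))}} = {v0, v1, v2} →
      ((v1.1 - v0.1) * (v2.2 - v0.2) - (v1.2 - v0.2) * (v2.1 - v0.1) = 1 ∨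
       (v1.1 - v0.1) * (v2.2 - v0.2) - (v1.2 - v0.2) * (v2.1 - v0.1) = -1)) := by
  constructor
  · -- Part 1: triangulation
    have hnc : ¬ Collinear ℝ (S10.emb '' (V : Set (ℤ × ℤ))) := by
      intro hcol
      have hie := S10.interior_empty_of_collinear hcol
      rw [hP] at hdim
      have : interior (convexHull ℝ
          ((fun p : ℤ × ℤ => ((p.1 : ℝ), (p.2 : ℝ))) '' (V : Set (ℤ × ℤ)))) = ∅ := hie
      rw [this] at hdim
      exact Set.not_nonempty_empty hdim
    obtain ⟨L, hL⟩ := S10.lemC V.card V le_rfl hnc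
    refine ⟨L.length, fun i => L.get i, ?_, ?_, ?_⟩
    · intro i
      exact hL.1 (L.get i) (List.get_mem L i)
    · have hU : (⋃ i : Fin L.length, S10.hullT (L.get i))
          = convexHull ℝ (S10.emb '' (V : Set (ℤ × ℤ))) := by
        rw [← hL.2.1]
        ext x
        simp only [Set.mem_iUnion]
        constructor
        · rintro ⟨i, hx⟩
          exact ⟨L.get i, List.get_mem L i, hx⟩
        · rintro ⟨t, ht, hx⟩
          obtain ⟨i, hi⟩ := List.get_of_mem ht
          exact ⟨i, hi ▸ hx⟩
      rw [hP]
      exact hU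
    · intro i j hij
      rcases lt_or_gt_of_ne hij with h | h
      · exact (List.pairwise_iff_get.mp hL.2.2) i j h
      · rw [Set.inter_comm]
        exact (List.pairwise_iff_get.mp hL.2.2) j i h
  · -- Part 2: maximal triangles are basic
    intro v0 v1 v2 hdet hset
    by_contra hcon
    push_neg at hcon
    obtain ⟨z, l0, l1, l2, h00, h10, h20, _, _, _, hsum, hc1, hc2, hz0, hz1, hz2⟩ :=
      S10.latticePoint v0 v1 v2 hdet hcon.1 hcon.2
    have hmem : S10.emb z ∈ convexHull ℝ {S10.emb v0, S10.emb v1, S10.emb v2} := by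
      rw [S10.emb_combo hc1 hc2]
      exact S10.mem_hull3 (by exact_mod_cast h00) (by exact_mod_cast h10)
        (by exact_mod_cast h20) (by exact_mod_cast hsum)
    have hz : z ∈ {z : ℤ × ℤ | ((z.1 : ℝ), (z.2 : ℝ)) ∈
        convexHull ℝ {((v0.1 : ℝ), (v0.2 : ℝ)), ((v1.1 : ℝ), (v1.2 : ℝ)),
          ((v2.1 : ℝ), (v2.2 : ℝ))}} := hmem
    rw [hset] at hz
    rcases hz with h | h | h
    · exact hz0 h
    · exact hz1 h
    · exact hz2 (Set.mem_singleton_iff.mp h)
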